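/- The rational map G_o: R^4 → R^4 defined by G_o(a_1, b_1, a_2, b_2) = (b_1, a_2, b_2, (a_2 + a_1 b_2 - 1)/(a_1 a_2 - b_1)) satisfies G_o^7 = id on the open set where all iterates are defined. -/

import Mathlib

/-- The map `G_o(a₁,b₁,a₂,b₂) = (b₁,a₂,b₂,(a₂+a₁b₂-1)/(a₁a₂-b₁))`. -/
noncomputable def goMap (p : ℝ × ℝ × ℝ × ℝ) : ℝ × ℝ × ℝ × ℝ :=
  (p.2.1, p.2.2.1, p.2.2.2,
    (p.2.2.1 + p.1 * p.2.2.2 - 1) / (p.1 * p.2.2.1 - p.2.1))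

/-- The rational map `G_o` is 7-periodic wherever all iterates are defined. -/
theorem stmt5 (p : ℝ × ℝ × ℝ × ℝ)
    (hdef : ∀ m < 7,
      (goMap^[m] p).1 * (goMap^[m] p).2.2.1 - (goMap^[m] p).2.1 ≠ 0) :
    goMap^[7] p = p := by
  obtain ⟨a, b, c, d⟩ := p
  -- closed forms
  set X5 : ℝ := (c + a * d - 1) / (a * c - b) with hX5
  set X6 : ℝ := (b*c - b*d - a*c + a*c*d + a*b*d) / ((a*c - b) * (b*d - c)) with hX6
  set X7 : ℝ := (b + a * d - 1) / (b * d - c) with hX7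
  -- step 0 denominator
  have n0 : a * c - b ≠ 0 := hdef 0 (by norm_num)
  have k1 : goMap (a, b, c, d) = (b, c, d, X5) := rfl
  have i1 : goMap^[1] (a, b, c, d) = (b, c, d, X5) := k1
  have n1 : b * d - c ≠ 0 := by
    have h := hdef 1 (by norm_num)
    rw [i1] at h
    exact h
  have n0' : c * a - b ≠ 0 := by rwa [mul_comm] at n0
  have n1' : d * b - c ≠ 0 := by rwa [mul_comm] at n1
  have k2 : goMap (b, c, d, X5) = (c, d, X5, X6) := by
    simp only [goMap]
    refine Prod.ext rfl (Prod.ext rfl (Prod.ext rfl ?_))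
    show (d + b * X5 - 1) / (b * d - c) = X6
    rw [hX5, hX6]
    field_simp
    ring
  have i2 : goMap^[2] (a, b, c, d) = (c, d, X5, X6) := by
    rw [show (2:ℕ) = 1 + 1 from rfl, Function.iterate_succ_apply', i1, k2]
  have hd2 : c * X5 - d ≠ 0 := by
    have h := hdef 2 (by norm_num)
    rw [i2] at h
    exact h
  have e2 : c * X5 - d = (c^2 - c + b*d) / (a*c - b) := by
    rw [hX5]; field_simp; ring
  have n2 : c^2 - c + b*d ≠ 0 := by
    intro h; exact hd2 (by rw [e2, h, zero_div])
  have n2' : c * (c - 1) + d * b ≠ 0 := by intro h; apply n2; linear_combination h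
  have k3 : goMap (c, d, X5, X6) = (d, X5, X6, X7) := by
    simp only [goMap]
    refine Prod.ext rfl (Prod.ext rfl (Prod.ext rfl ?_))
    show (X5 + c * X6 - 1) / (c * X5 - d) = X7
    rw [e2, hX5, hX6, hX7]
    field_simp
    ring
  have i3 : goMap^[3] (a, b, c, d) = (d, X5, X6, X7) := by
    rw [show (3:ℕ) = 2 + 1 from rfl, Function.iterate_succ_apply', i2, k3]
  have hd3 : d * X6 - X5 ≠ 0 := by
    have h := hdef 3 (by norm_num)
    rw [i3] at h
    exact h
  have e3 : d * X6 - X5 = (c^2 - c + b*d - b*d^2 + a*c*d^2) / ((a*c - b) * (b*d - c)) := by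
    rw [hX5, hX6]; field_simp; ring
  have n3 : c^2 - c + b*d - b*d^2 + a*c*d^2 ≠ 0 := by
    intro h; exact hd3 (by rw [e3, h, zero_div])
  have n3' : c * (c - 1) + b * d - b * d ^ 2 + c * d ^ 2 * a ≠ 0 := by intro h; apply n3; linear_combination h
  have k4 : goMap (d, X5, X6, X7) = (X5, X6, X7, a) := by
    simp only [goMap]
    refine Prod.ext rfl (Prod.ext rfl (Prod.ext rfl ?_))
    show (X6 + d * X7 - 1) / (d * X6 - X5) = a
    rw [e3, hX6, hX7]
    field_simp
    ring
  have i4 : goMap^[4] (a, b, c, d) = (X5, X6, X7, a) := by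
    rw [show (4:ℕ) = 3 + 1 from rfl, Function.iterate_succ_apply', i3, k4]
  have hd4 : X5 * X7 - X6 ≠ 0 := by
    have h := hdef 4 (by norm_num)
    rw [i4] at h
    exact h
  have e4 : X5 * X7 - X6 = (1 - c - b + b*d - 2*a*d + a*c + a^2*d^2) / ((a*c - b) * (b*d - c)) := by
    rw [hX5, hX6, hX7]; field_simp; ring
  have n4 : 1 - c - b + b*d - 2*a*d + a*c + a^2*d^2 ≠ 0 := by
    intro h; exact hd4 (by rw [e4, h, zero_div])
  have n4' : 1 - c - b + b * d - a * d * 2 + a * c + a ^ 2 * d ^ 2 ≠ 0 := by intro h; apply n4; linear_combination h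
  have k5 : goMap (X5, X6, X7, a) = (X6, X7, a, b) := by
    simp only [goMap]
    refine Prod.ext rfl (Prod.ext rfl (Prod.ext rfl ?_))
    show (X7 + X5 * a - 1) / (X5 * X7 - X6) = b
    rw [e4, hX5, hX7]
    field_simp
    ring
  have i5 : goMap^[5] (a, b, c, d) = (X6, X7, a, b) := by
    rw [show (5:ℕ) = 4 + 1 from rfl, Function.iterate_succ_apply', i4, k5]
  have hd5 : X6 * a - X7 ≠ 0 := by
    have h := hdef 5 (by norm_num)
    rw [i5] at h
    exact h
  have e5 : X6 * a - X7 = (b^2 - b + a*c - a^2*c + a^2*b*d) / ((a*c - b) * (b*d - c)) := by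
    rw [hX6, hX7]; field_simp; ring
  have n5 : b^2 - b + a*c - a^2*c + a^2*b*d ≠ 0 := by
    intro h; exact hd5 (by rw [e5, h, zero_div])
  have n5' : b * (b - 1) + a * c - a ^ 2 * c + a ^ 2 * b * d ≠ 0 := by intro h; apply n5; linear_combination h
  have k6 : goMap (X6, X7, a, b) = (X7, a, b, c) := by
    simp only [goMap]
    refine Prod.ext rfl (Prod.ext rfl (Prod.ext rfl ?_))
    show (a + X6 * b - 1) / (X6 * a - X7) = c
    rw [e5, hX6]
    field_simp
    ring
  have i6 : goMap^[6] (a, b, c, d) = (X7, a, b, c) := by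
    rw [show (6:ℕ) = 5 + 1 from rfl, Function.iterate_succ_apply', i5, k6]
  have hd6 : X7 * b - a ≠ 0 := by
    have h := hdef 6 (by norm_num)
    rw [i6] at h
    exact h
  have e6 : X7 * b - a = (b^2 - b + a*c) / (b*d - c) := by
    rw [hX7]; field_simp; ring
  have n6 : b^2 - b + a*c ≠ 0 := by
    intro h; exact hd6 (by rw [e6, h, zero_div])
  have n6' : b * (b - 1) + a * c ≠ 0 := by intro h; apply n6; linear_combination h
  have k7 : goMap (X7, a, b, c) = (a, b, c, d) := by
    simp only [goMap]
    refine Prod.ext rfl (Prod.ext rfl (Prod.ext rfl ?_))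
    show (b + X7 * c - 1) / (X7 * b - a) = d
    rw [e6, hX7]
    field_simp
    ring
  rw [show (7:ℕ) = 6 + 1 from rfl, Function.iterate_succ_apply', i6, k7]
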